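/- Under ordered sequence detection of a DPIM packet, the packet is wrongly detected if and only if the maximum of the L − N_s noise-only samples exceeds the minimum of the N_s pulse samples; hence the packet error probability equals Pr{U_{1:L−N_s} > V_{N_s:N_s}} = ∫_{-∞}^{∞} (1 − F_U(v)^{L−N_s})·f_{V_{N_s:N_s}}(v) dv, where f_{V_{N_s:N_s}}(v) = N_s·(1 − F_V(v))^{N_s−1}·f_V(v). -/

import Mathlib

open MeasureTheory ProbabilityTheory Set Filter Real

variable {a : ℝ} {vv : NNReal}

lemma cont_gpdf (a : ℝ) (vv : NNReal) : Continuous (gaussianPDFReal a vv) := by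
  rw [gaussianPDFReal_def]; fun_prop

lemma cdf_gauss_eq (hv : vv ≠ 0) (x : ℝ) :
    cdf (gaussianReal a vv) x = ∫ t in Iic x, gaussianPDFReal a vv t := by
  rw [cdf_eq_real, measureReal_def, gaussianReal_apply_eq_integral a hv,
    ENNReal.toReal_ofReal (integral_nonneg fun t => gaussianPDFReal_nonneg a vv t)]

lemma hasDerivAt_cdf_gauss (hv : vv ≠ 0) (x : ℝ) :
    HasDerivAt (fun y => cdf (gaussianReal a vv) y) (gaussianPDFReal a vv x) x := by
  have hint := integrable_gaussianPDFReal a vv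
  have key : (fun y => cdf (gaussianReal a vv) y)
      = fun y => (∫ t in Iic (0:ℝ), gaussianPDFReal a vv t)
        + ∫ t in (0:ℝ)..y, gaussianPDFReal a vv t := by
    funext y
    rw [cdf_gauss_eq hv,
      ← intervalIntegral.integral_Iic_sub_Iic hint.integrableOn hint.integrableOn]
    ring
  rw [key]
  exact (intervalIntegral.integral_hasDerivAt_right hint.intervalIntegrable
    ((cont_gpdf a vv).stronglyMeasurable.stronglyMeasurableAtFilter)
    (cont_gpdf a vv).continuousAt).const_add _

lemma cont_cdf_gauss (hv : vv ≠ 0) : Continuous (fun y => cdf (gaussianReal a vv) y) :=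
  continuous_iff_continuousAt.mpr fun x => (hasDerivAt_cdf_gauss hv x).continuousAt

lemma tail_integrable (hv : vv ≠ 0) (n : ℕ) :
    Integrable (fun t => (n : ℝ) * (1 - cdf (gaussianReal a vv) t) ^ (n - 1)
      * gaussianPDFReal a vv t) := by
  refine (integrable_gaussianPDFReal a vv).bdd_mul (c := n) ?_ ?_
  · exact (continuous_const.mul (((continuous_const.sub (cont_cdf_gauss hv)).pow _))).aestronglyMeasurable
  · refine ae_of_all _ fun t => ?_
    rw [norm_mul, norm_pow]
    have h1 : |1 - cdf (gaussianReal a vv) t| ≤ 1 := by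
      rw [abs_le]
      constructor
      · have := cdf_le_one (gaussianReal a vv) t; linarith
      · have := cdf_nonneg (gaussianReal a vv) t; linarith
    have h2 : ‖1 - cdf (gaussianReal a vv) t‖ ^ (n-1) ≤ 1 :=
      pow_le_one₀ (norm_nonneg _) h1
    have h3 : ‖(n:ℝ)‖ * ‖1 - cdf (gaussianReal a vv) t‖ ^ (n-1) ≤ ‖(n:ℝ)‖ * 1 :=
      mul_le_mul_of_nonneg_left h2 (norm_nonneg _)
    simpa using h3

lemma tail_integral (hv : vv ≠ 0) {n : ℕ} (hn : 1 ≤ n) (x : ℝ) :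
    ∫ t in Ioi x, (n : ℝ) * (1 - cdf (gaussianReal a vv) t) ^ (n - 1)
      * gaussianPDFReal a vv t = (1 - cdf (gaussianReal a vv) x) ^ n := by
  set F := fun y => (cdf (gaussianReal a vv)) y with hF
  have hderiv : ∀ t ∈ Ici x, HasDerivAt (fun y => -(1 - F y) ^ n)
      ((n : ℝ) * (1 - F t) ^ (n - 1) * gaussianPDFReal a vv t) t := by
    intro t _
    have h1 : HasDerivAt (fun y => 1 - F y) (-(gaussianPDFReal a vv t)) t :=
      (hasDerivAt_cdf_gauss hv t).const_sub 1
    have h2 := (h1.fun_pow n).fun_neg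
    exact h2.congr_deriv (by ring)
  have htend : Tendsto (fun y => -(1 - F y) ^ n) atTop (nhds 0) := by
    have : Tendsto (fun y => -(1 - F y) ^ n) atTop (nhds (-(1 - 1)^n)) :=
      (((tendsto_const_nhds).sub (tendsto_cdf_atTop (gaussianReal a vv))).pow n).neg
    simpa [zero_pow (by omega : n ≠ 0)] using this
  have := integral_Ioi_of_hasDerivAt_of_tendsto' hderiv
    (tail_integrable hv n).integrableOn htend
  rw [this]
  ring

lemma finset_measurable_inf'' {ι δ : Type*} [MeasurableSpace δ] {s : Finset ι}
    (hs : s.Nonempty) {f : ι → δ → ℝ} (hf : ∀ n ∈ s, Measurable (f n)) :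
    Measurable (s.inf' hs f) :=
  Finset.inf'_induction hs _ (fun _f hf _g hg => hf.inf hg) fun n hn => hf n hn

/-- OSD packet error probability: with `m = L − N_s` independent noise-only Gaussian samples
(mean `0`) and `n = N_s` independent pulse samples (mean `A`), all with variance `σ²/h²`,
the packet is wrongly detected iff the maximum noise sample exceeds the minimum pulse
sample, and
`Pr{U_{1:m} > V_{n:n}} = ∫ (1 − F_U(v)^m)·(n·(1−F_V(v))^{n−1}·f_V(v)) dv`. -/
theorem osd_packet_error_probability {Ω : Type*} [MeasurableSpace Ω]
    (P : Measure Ω) [IsProbabilityMeasure P]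
    (L Ns : ℕ) (hNs : 1 ≤ Ns) (hNsL : Ns < L)
    (A σ h : ℝ) (hA : 0 < A) (hσ : 0 < σ) (hh : 0 < h)
    (X : (Fin (L - Ns) ⊕ Fin Ns) → Ω → ℝ) (hX : ∀ i, Measurable (X i))
    (hind : iIndepFun X P)
    (hU : ∀ i : Fin (L - Ns), P.map (X (Sum.inl i))
            = gaussianReal 0 (Real.toNNReal (σ ^ 2 / h ^ 2)))
    (hV : ∀ j : Fin Ns, P.map (X (Sum.inr j))
            = gaussianReal A (Real.toNNReal (σ ^ 2 / h ^ 2))) :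
    (P {ω | Finset.univ.sup' ⟨⟨0, by omega⟩, Finset.mem_univ _⟩
              (fun i => X (Sum.inl i) ω)
          > Finset.univ.inf' ⟨⟨0, by omega⟩, Finset.mem_univ _⟩
              (fun j => X (Sum.inr j) ω)}).toReal
      = ∫ v, (1 - (cdf (gaussianReal 0 (Real.toNNReal (σ ^ 2 / h ^ 2))) v) ^ (L - Ns))
          * ((Ns : ℝ)
            * (1 - cdf (gaussianReal A (Real.toNNReal (σ ^ 2 / h ^ 2))) v) ^ (Ns - 1)
            * gaussianPDFReal A (Real.toNNReal (σ ^ 2 / h ^ 2)) v) := by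
  have hv : Real.toNNReal (σ ^ 2 / h ^ 2) ≠ 0 := by
    simp only [ne_eq, Real.toNNReal_eq_zero, not_le]
    positivity
  set vv : NNReal := Real.toNNReal (σ ^ 2 / h ^ 2) with hvv
  have hm1 : 1 ≤ L - Ns := by omega
  have neS : (Finset.univ : Finset (Fin (L - Ns))).Nonempty := ⟨⟨0, by omega⟩, Finset.mem_univ _⟩
  have neT : (Finset.univ : Finset (Fin Ns)).Nonempty := ⟨⟨0, by omega⟩, Finset.mem_univ _⟩
  set M : Ω → ℝ := fun ω => Finset.univ.sup' neS (fun i => X (Sum.inl i) ω) with hMdef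
  set W : Ω → ℝ := fun ω => Finset.univ.inf' neT (fun j => X (Sum.inr j) ω) with hWdef
  set μ0 := gaussianReal 0 vv with hμ0
  set μA := gaussianReal A vv with hμA
  have hM : Measurable M := by
    have h1 := Finset.measurable_sup' neS (fun i _ => hX (Sum.inl i))
    have h2 : M = Finset.univ.sup' neS (fun i => X (Sum.inl i)) := by
      funext ω; rw [Finset.sup'_apply]
    rwa [h2]
  have hW : Measurable W := by
    have h1 := finset_measurable_inf'' neT (fun j _ => hX (Sum.inr j))
    have h2 : W = Finset.univ.inf' neT (fun j => X (Sum.inr j)) := by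
      funext ω; rw [Finset.inf'_apply]
    rwa [h2]
  haveI hPM : IsProbabilityMeasure (P.map M) := Measure.isProbabilityMeasure_map hM.aemeasurable
  haveI hPW : IsProbabilityMeasure (P.map W) := Measure.isProbabilityMeasure_map hW.aemeasurable
  have hIicM : ∀ w : ℝ, P.map M (Set.Iic w) = ENNReal.ofReal ((cdf μ0 w) ^ (L - Ns)) := by
    intro w
    rw [Measure.map_apply hM measurableSet_Iic]
    have hpre : M ⁻¹' Set.Iic w = ⋂ k ∈ (Finset.univ.map ⟨Sum.inl, Sum.inl_injective⟩ :
        Finset (Fin (L - Ns) ⊕ Fin Ns)), X k ⁻¹' Set.Iic w := by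
      ext ω
      simp only [Set.mem_preimage, Set.mem_Iic, Set.mem_iInter, Finset.mem_map,
        Finset.mem_univ, true_and, Function.Embedding.coeFn_mk, hMdef]
      rw [Finset.sup'_le_iff]
      constructor
      · rintro hle k ⟨i, rfl⟩; exact hle i (Finset.mem_univ i)
      · intro hle i _; exact hle _ ⟨i, rfl⟩
    rw [hpre, hind.meas_biInter (fun k _ => ⟨Set.Iic w, measurableSet_Iic, rfl⟩),
      Finset.prod_map]
    have hterm : ∀ i : Fin (L - Ns),
        P (X (Sum.inl i) ⁻¹' Set.Iic w) = ENNReal.ofReal (cdf μ0 w) := by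
      intro i
      rw [← Measure.map_apply (hX (Sum.inl i)) measurableSet_Iic, hU i, ofReal_cdf]
    simp only [Function.Embedding.coeFn_mk, hterm]
    rw [Finset.prod_const, Finset.card_univ, Fintype.card_fin,
      ← ENNReal.ofReal_pow (cdf_nonneg _ _)]
  have hIoiM : ∀ w : ℝ, P.map M (Set.Ioi w) = ENNReal.ofReal (1 - (cdf μ0 w) ^ (L - Ns)) := by
    intro w
    have := prob_compl_eq_one_sub (μ := P.map M) measurableSet_Iic (s := Set.Iic w)
    rw [compl_Iic] at this
    rw [this, hIicM w, ENNReal.ofReal_sub _ (pow_nonneg (cdf_nonneg _ _) _), ENNReal.ofReal_one]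
  have hIciW : ∀ w : ℝ, P.map W (Set.Ici w) = ENNReal.ofReal ((1 - cdf μA w) ^ Ns) := by
    intro w
    rw [Measure.map_apply hW measurableSet_Ici]
    have hpre : W ⁻¹' Set.Ici w = ⋂ k ∈ (Finset.univ.map ⟨Sum.inr, Sum.inr_injective⟩ :
        Finset (Fin (L - Ns) ⊕ Fin Ns)), X k ⁻¹' Set.Ici w := by
      ext ω
      simp only [Set.mem_preimage, Set.mem_Ici, Set.mem_iInter, Finset.mem_map,
        Finset.mem_univ, true_and, Function.Embedding.coeFn_mk, hWdef]
      rw [Finset.le_inf'_iff]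
      constructor
      · rintro hle k ⟨j, rfl⟩; exact hle j (Finset.mem_univ j)
      · intro hle j _; exact hle _ ⟨j, rfl⟩
    have hμAIci : μA (Set.Ici w) = ENNReal.ofReal (1 - cdf μA w) := by
      have hsing : μA {w} = 0 :=
        gaussianReal_absolutelyContinuous A hv (volume_singleton)
      have hIoi : μA (Set.Ici w) = μA (Set.Ioi w) := by
        rw [← Set.Ioi_union_left, measure_union (by simp) (measurableSet_singleton w),
          hsing, add_zero]
      have hcompl := prob_compl_eq_one_sub (μ := μA) measurableSet_Iic (s := Set.Iic w)
      rw [compl_Iic] at hcompl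
      rw [hIoi, hcompl, ← ofReal_cdf μA w, ← ENNReal.ofReal_one,
        ← ENNReal.ofReal_sub _ (cdf_nonneg _ _)]
    rw [hpre, hind.meas_biInter (fun k _ => ⟨Set.Ici w, measurableSet_Ici, rfl⟩),
      Finset.prod_map]
    have hterm : ∀ j : Fin Ns,
        P (X (Sum.inr j) ⁻¹' Set.Ici w) = ENNReal.ofReal (1 - cdf μA w) := by
      intro j
      rw [← Measure.map_apply (hX (Sum.inr j)) measurableSet_Ici, hV j, hμAIci]
    simp only [Function.Embedding.coeFn_mk, hterm]
    rw [Finset.prod_const, Finset.card_univ, Fintype.card_fin,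
      ← ENNReal.ofReal_pow (by have := cdf_le_one μA w; linarith)]
  set d : ℝ → ℝ := fun v => (Ns : ℝ) * (1 - cdf μA v) ^ (Ns - 1) * gaussianPDFReal A vv v
    with hd
  have hd_nonneg : ∀ v, 0 ≤ d v := fun v =>
    mul_nonneg (mul_nonneg (Nat.cast_nonneg _)
      (pow_nonneg (by have := cdf_le_one μA v; linarith) _)) (gaussianPDFReal_nonneg A vv v)
  have hd_int : Integrable d := tail_integrable hv Ns
  have hd_meas : Measurable d :=
    ((continuous_const.mul ((continuous_const.sub (cont_cdf_gauss hv)).pow _)).mul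
      (cont_gpdf A vv)).measurable
  set ν := volume.withDensity (fun v => ENNReal.ofReal (d v)) with hν
  haveI hνfin : IsFiniteMeasure ν := by
    constructor
    rw [hν, withDensity_apply _ MeasurableSet.univ, Measure.restrict_univ,
      ← ofReal_integral_eq_lintegral_ofReal hd_int (ae_of_all _ hd_nonneg)]
    exact ENNReal.ofReal_lt_top
  have hmapW : P.map W = ν := by
    refine Measure.ext_of_Ici _ _ (fun w => ?_)
    rw [hIciW w, hν, withDensity_apply _ measurableSet_Ici,
      ← ofReal_integral_eq_lintegral_ofReal hd_int.integrableOn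
        (ae_of_all _ hd_nonneg)]
    rw [integral_Ici_eq_integral_Ioi, hd]
    rw [tail_integral hv hNs w]
  -- independence of M and W
  have hdisj : Disjoint
      (Finset.univ.map ⟨Sum.inl, Sum.inl_injective⟩ : Finset (Fin (L - Ns) ⊕ Fin Ns))
      (Finset.univ.map ⟨Sum.inr, Sum.inr_injective⟩) := by
    simp [Finset.disjoint_left]
  have hIF := hind.indepFun_finset _ _ hdisj hX
  have hMW : IndepFun M W P := by
    classical
    set SL : Finset (Fin (L - Ns) ⊕ Fin Ns) := Finset.univ.map ⟨Sum.inl, Sum.inl_injective⟩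
      with hSL
    set SR : Finset (Fin (L - Ns) ⊕ Fin Ns) := Finset.univ.map ⟨Sum.inr, Sum.inr_injective⟩
      with hSR
    have hmemL : ∀ i : Fin (L - Ns), Sum.inl i ∈ SL := by intro i; simp [hSL]
    have hmemR : ∀ j : Fin Ns, Sum.inr j ∈ SR := by intro j; simp [hSR]
    set φ : ({k // k ∈ SL} → ℝ) → ℝ :=
      fun g => Finset.univ.sup' neS fun i : Fin (L - Ns) => g ⟨Sum.inl i, hmemL i⟩ with hφdef
    set ψ : ({k // k ∈ SR} → ℝ) → ℝ :=
      fun g => Finset.univ.inf' neT fun j : Fin Ns => g ⟨Sum.inr j, hmemR j⟩ with hψdef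
    have hφ : Measurable φ := by
      have h1 := Finset.measurable_sup' (δ := {k // k ∈ SL} → ℝ) neS
        (f := fun (i : Fin (L - Ns)) g => g ⟨Sum.inl i, hmemL i⟩)
        (fun i _ => measurable_pi_apply _)
      have heq : φ = Finset.univ.sup' neS
          (fun (i : Fin (L - Ns)) (g : {k // k ∈ SL} → ℝ) => g ⟨Sum.inl i, hmemL i⟩) := by
        funext g; rw [Finset.sup'_apply]
      rwa [heq]
    have hψ : Measurable ψ := by
      have h1 := finset_measurable_inf'' (δ := {k // k ∈ SR} → ℝ) neT
        (f := fun (j : Fin Ns) g => g ⟨Sum.inr j, hmemR j⟩)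
        (fun j _ => measurable_pi_apply _)
      have heq : ψ = Finset.univ.inf' neT
          (fun (j : Fin Ns) (g : {k // k ∈ SR} → ℝ) => g ⟨Sum.inr j, hmemR j⟩) := by
        funext g; rw [Finset.inf'_apply]
      rwa [heq]
    exact hIF.comp hφ hψ
  -- main computation
  have hs : MeasurableSet {p : ℝ × ℝ | p.2 < p.1} :=
    measurableSet_lt measurable_snd measurable_fst
  have hmain : P {ω | W ω < M ω}
      = ∫⁻ v, ENNReal.ofReal ((1 - (cdf μ0 v) ^ (L - Ns)) * d v) := by
    have h1 : {ω | W ω < M ω} = (fun ω => (M ω, W ω)) ⁻¹' {p : ℝ × ℝ | p.2 < p.1} := rfl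
    rw [h1, ← Measure.map_apply (hM.prodMk hW) hs,
      (indepFun_iff_map_prod_eq_prod_map_map hM.aemeasurable hW.aemeasurable).mp hMW,
      Measure.prod_apply_symm hs]
    have h2 : ∀ w : ℝ, (fun u => (u, w)) ⁻¹' {p : ℝ × ℝ | p.2 < p.1} = Set.Ioi w :=
      fun w => rfl
    simp_rw [h2, hIoiM]
    rw [hmapW, hν, lintegral_withDensity_eq_lintegral_mul _ hd_meas.ennreal_ofReal
      (by exact (measurable_const.sub ((cont_cdf_gauss (a := 0) hv).measurable.pow_const
        _)).ennreal_ofReal)]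
    congr 1
    funext v
    rw [Pi.mul_apply, ← ENNReal.ofReal_mul (hd_nonneg v), mul_comm (d v)]
  have hfin : (P {ω | W ω < M ω}).toReal
      = ∫ v, (1 - (cdf μ0 v) ^ (L - Ns)) * d v := by
    rw [integral_eq_lintegral_of_nonneg_ae
      (ae_of_all _ fun v => mul_nonneg
        (by have h1 := cdf_nonneg μ0 v; have h2 := cdf_le_one μ0 v
            have := pow_le_one₀ h1 h2 (n := L - Ns); linarith)
        (hd_nonneg v))
      ((measurable_const.fun_sub ((cont_cdf_gauss (a := 0) hv).measurable.pow_const _)).fun_mul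
        hd_meas).aestronglyMeasurable, hmain]
  exact hfin
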